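/- Let a ∈ ℂ and let I ⊆ F be the two-sided ideal generated by the three elements x₂x₁ − x₁x₂ − 2x₁², x₃x₁ − x₁x₃ − 2x₁x₂, and x₃x₂ − x₂x₃ − 2a x₂² + (4a − 2) x₁x₃ + (8a − 4) x₁x₂ − 4a(a+1) x₁². Then the images in F/I of the monomials x₁^{a₁} x₂^{a₂} x₃^{a₃}, over all a₁, a₂, a₃ ∈ ℕ, form a ℂ-basis of F/I. (This quotient is the Nichols algebra associated to the braiding of type R_{1,10} with t = 1; it has Gelfand–Kirillov dimension 3.) -/

import Mathlib

/-- The free associative unital `ℂ`-algebra on three generators. -/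
abbrev F : Type := FreeAlgebra ℂ (Fin 3)

/-- The generators `x₁ = X 0`, `x₂ = X 1`, `x₃ = X 2`. -/
noncomputable def X (i : Fin 3) : F := FreeAlgebra.ι ℂ i

/-- Generators: `x₂x₁ − x₁x₂ − 2x₁²`, `x₃x₁ − x₁x₃ − 2x₁x₂`, `x₃x₂ − x₂x₃ − 2a x₂² + (4a−2) x₁x₃ + (8a−4) x₁x₂ − 4a(a+1) x₁²`. -/
noncomputable def S (a : ℂ) : Set F :=
  {X 1 * X 0 - X 0 * X 1 - (2 : ℂ) • (X 0 * X 0),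
   X 2 * X 0 - X 0 * X 2 - (2 : ℂ) • (X 0 * X 1),
   X 2 * X 1 - X 1 * X 2 - (2 * a) • (X 1 * X 1) + (4 * a - 2) • (X 0 * X 2) + (8 * a - 4) • (X 0 * X 1) - (4 * a * (a + 1)) • (X 0 * X 0)}

/-- The relation whose two-sided-ideal closure is the ideal generated by `S`;
`RingQuot rel` is the quotient `F/I`. -/
def rel (a : ℂ) : F → F → Prop := fun x y => x ∈ S a ∧ y = 0

noncomputable section
abbrev V : Type := (ℕ × ℕ × ℕ) →₀ ℂ

def sgl (e : ℕ × ℕ × ℕ) : V := Finsupp.single e 1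

def T0 : V →ₗ[ℂ] V :=
  Finsupp.lift V ℂ (ℕ × ℕ × ℕ) (fun e => sgl (e.1 + 1, e.2.1, e.2.2))

def T1 : V →ₗ[ℂ] V :=
  Finsupp.lift V ℂ (ℕ × ℕ × ℕ)
    (fun e => sgl (e.1, e.2.1 + 1, e.2.2) + (2 * (e.1 : ℂ)) • sgl (e.1 + 1, e.2.1, e.2.2))

lemma lift_sgl (f : ℕ × ℕ × ℕ → V) (e : ℕ × ℕ × ℕ) :
    Finsupp.lift V ℂ (ℕ × ℕ × ℕ) f (sgl e) = f e := by
  simp [sgl, Finsupp.lift_apply, Finsupp.sum_single_index]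

lemma T0_sgl (i j k : ℕ) : T0 (sgl (i, j, k)) = sgl (i + 1, j, k) := lift_sgl _ _

lemma T1_sgl (i j k : ℕ) :
    T1 (sgl (i, j, k)) = sgl (i, j + 1, k) + (2 * (i : ℂ)) • sgl (i + 1, j, k) := lift_sgl _ _

def t2 (a : ℂ) : ℕ → ℕ → ℕ → V
  | 0, 0, k => sgl (0, 0, k + 1)
  | 0, j + 1, k =>
      T1 (t2 a 0 j k) + (2 * a) • T1 (T1 (sgl (0, j, k)))
        - (4 * a - 2) • T0 (t2 a 0 j k) - (8 * a - 4) • T0 (T1 (sgl (0, j, k)))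
        + (4 * a * (a + 1)) • T0 (T0 (sgl (0, j, k)))
  | i + 1, j, k => T0 (t2 a i j k) + (2 : ℂ) • T0 (T1 (sgl (i, j, k)))

def T2 (a : ℂ) : V →ₗ[ℂ] V :=
  Finsupp.lift V ℂ (ℕ × ℕ × ℕ) (fun e => t2 a e.1 e.2.1 e.2.2)

lemma T2_sgl (a : ℂ) (i j k : ℕ) : T2 a (sgl (i, j, k)) = t2 a i j k := lift_sgl _ _

lemma Vext {f g : V →ₗ[ℂ] V} (h : ∀ e, f (sgl e) = g (sgl e)) : f = g := by
  refine Finsupp.lhom_ext fun e c => ?_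
  have : (Finsupp.single e c : V) = c • sgl e := by simp [sgl, Finsupp.smul_single]
  rw [this, map_smul, map_smul, h e]

lemma R1' (v : V) : T1 (T0 v) = T0 (T1 v) + (2 : ℂ) • T0 (T0 v) := by
  have : T1 ∘ₗ T0 = T0 ∘ₗ T1 + (2 : ℂ) • (T0 ∘ₗ T0) := by
    refine Vext fun ⟨i, j, k⟩ => ?_
    simp only [LinearMap.comp_apply, LinearMap.add_apply, LinearMap.smul_apply,
      T0_sgl, T1_sgl, map_add, map_smul]
    push_cast
    module
  simpa using congrFun (congrArg (fun f => f.toFun) this) v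

lemma R2' (a : ℂ) (v : V) : T2 a (T0 v) = T0 (T2 a v) + (2 : ℂ) • T0 (T1 v) := by
  have : T2 a ∘ₗ T0 = T0 ∘ₗ T2 a + (2 : ℂ) • (T0 ∘ₗ T1) := by
    refine Vext fun ⟨i, j, k⟩ => ?_
    simp only [LinearMap.comp_apply, LinearMap.add_apply, LinearMap.smul_apply,
      T0_sgl, T2_sgl, T1_sgl, t2, map_add, map_smul]
  simpa using congrFun (congrArg (fun f => f.toFun) this) v

lemma R3pt (a : ℂ) : ∀ i j k : ℕ,
    T2 a (T1 (sgl (i, j, k))) =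
      T1 (T2 a (sgl (i, j, k))) + (2 * a) • T1 (T1 (sgl (i, j, k)))
        - (4 * a - 2) • T0 (T2 a (sgl (i, j, k))) - (8 * a - 4) • T0 (T1 (sgl (i, j, k)))
        + (4 * a * (a + 1)) • T0 (T0 (sgl (i, j, k))) := by
  intro i
  induction i with
  | zero =>
      intro j k
      have h1 : T1 (sgl (0, j, k)) = sgl (0, j + 1, k) := by
        rw [T1_sgl]; push_cast; simp
      rw [h1, T2_sgl, T2_sgl]
      show t2 a 0 (j+1) k = _
      rw [t2]
      simp only [h1]
  | succ i ih =>
      intro j k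
      have h0 : sgl (i + 1, j, k) = T0 (sgl (i, j, k)) := (T0_sgl i j k).symm
      rw [h0]
      simp only [R1', map_add, map_smul, R2', ih, smul_add, smul_sub, map_sub]
      module

lemma R3' (a : ℂ) (v : V) :
    T2 a (T1 v) =
      T1 (T2 a v) + (2 * a) • T1 (T1 v) - (4 * a - 2) • T0 (T2 a v)
        - (8 * a - 4) • T0 (T1 v) + (4 * a * (a + 1)) • T0 (T0 v) := by
  have : T2 a ∘ₗ T1 = T1 ∘ₗ T2 a + (2 * a) • (T1 ∘ₗ T1) - (4 * a - 2) • (T0 ∘ₗ T2 a)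
      - (8 * a - 4) • (T0 ∘ₗ T1) + (4 * a * (a + 1)) • (T0 ∘ₗ T0) := by
    refine Vext fun ⟨i, j, k⟩ => ?_
    simpa using R3pt a i j k
  simpa using congrFun (congrArg (fun f => f.toFun) this) v

def Trep (a : ℂ) : Fin 3 → Module.End ℂ V := ![T0, T1, T2 a]

def phi (a : ℂ) : FreeAlgebra ℂ (Fin 3) →ₐ[ℂ] Module.End ℂ V :=
  FreeAlgebra.lift ℂ (Trep a)

lemma phi_X (a : ℂ) (i : Fin 3) : phi a (FreeAlgebra.ι ℂ i) = Trep a i :=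
  by simp [phi]

end


noncomputable section

lemma phi_kills (a : ℂ) : ∀ ⦃x y : F⦄, rel a x y → phi a x = phi a y := by
  rintro x y ⟨hx, rfl⟩
  rw [map_zero]
  have e0 : phi a (X 0) = T0 := phi_X a 0
  have e1 : phi a (X 1) = T1 := phi_X a 1
  have e2 : phi a (X 2) = T2 a := phi_X a 2
  rcases hx with h | h | h <;> subst h <;>
    simp only [map_sub, map_add, map_mul, map_smul, e0, e1, e2] <;>
    refine LinearMap.ext fun v => ?_ <;>
    simp only [LinearMap.sub_apply, LinearMap.add_apply, LinearMap.smul_apply,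
      Module.End.mul_apply, LinearMap.zero_apply, R1', R2', R3'] <;>
    module

def psi (a : ℂ) : RingQuot (rel a) →ₐ[ℂ] Module.End ℂ V :=
  RingQuot.liftAlgHom ℂ ⟨phi a, phi_kills a⟩

lemma psi_mk (a : ℂ) (x : F) :
    psi a (RingQuot.mkAlgHom ℂ (rel a) x) = phi a x := by
  simp [psi, RingQuot.liftAlgHom_mkAlgHom_apply]

lemma pow_T2_apply (a : ℂ) : ∀ k : ℕ, ((T2 a) ^ k) (sgl (0, 0, 0)) = sgl (0, 0, k) := by
  intro k
  induction k with
  | zero => simp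
  | succ k ih => rw [pow_succ', Module.End.mul_apply, ih, T2_sgl, t2]

lemma pow_T1_apply : ∀ j k : ℕ, (T1 ^ j) (sgl (0, 0, k)) = sgl (0, j, k) := by
  intro j k
  induction j with
  | zero => simp
  | succ j ih =>
      rw [pow_succ', Module.End.mul_apply, ih, T1_sgl]
      push_cast
      simp

lemma pow_T0_apply : ∀ i j k : ℕ, (T0 ^ i) (sgl (0, j, k)) = sgl (i, j, k) := by
  intro i j k
  induction i with
  | zero => simp
  | succ i ih => rw [pow_succ', Module.End.mul_apply, ih, T0_sgl]

lemma psi_mon (a : ℂ) (e : ℕ × ℕ × ℕ) :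
    (psi a (RingQuot.mkAlgHom ℂ (rel a) (X 0 ^ e.1 * X 1 ^ e.2.1 * X 2 ^ e.2.2)))
      (sgl (0, 0, 0)) = sgl e := by
  obtain ⟨i, j, k⟩ := e
  rw [psi_mk]
  simp only [map_mul, map_pow, X, phi_X]
  show ((Trep a 0) ^ i * (Trep a 1) ^ j * (Trep a 2) ^ k) (sgl (0,0,0)) = _
  have h0 : Trep a 0 = T0 := rfl
  have h1 : Trep a 1 = T1 := rfl
  have h2 : Trep a 2 = T2 a := rfl
  rw [h0, h1, h2, Module.End.mul_apply, Module.End.mul_apply, pow_T2_apply,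
    pow_T1_apply, pow_T0_apply]

theorem indep (a : ℂ) :
    LinearIndependent ℂ (fun e : ℕ × ℕ × ℕ =>
      RingQuot.mkAlgHom ℂ (rel a) (X 0 ^ e.1 * X 1 ^ e.2.1 * X 2 ^ e.2.2)) := by
  have hs : LinearIndependent ℂ (fun e : ℕ × ℕ × ℕ => sgl e) := by
    have := (Finsupp.basisSingleOne (R := ℂ) (ι := ℕ × ℕ × ℕ)).linearIndependent
    simpa [sgl, Finsupp.coe_basisSingleOne] using this
  refine LinearIndependent.of_comp
    ((LinearMap.applyₗ (sgl (0, 0, 0))).comp (psi a).toLinearMap) ?_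
  have : (fun e : ℕ × ℕ × ℕ =>
      ((LinearMap.applyₗ (sgl (0,0,0))).comp (psi a).toLinearMap)
        (RingQuot.mkAlgHom ℂ (rel a) (X 0 ^ e.1 * X 1 ^ e.2.1 * X 2 ^ e.2.2)))
      = fun e => sgl e := funext fun e => psi_mon a e
  rw [show (((LinearMap.applyₗ (sgl (0,0,0))).comp (psi a).toLinearMap) ∘ fun e : ℕ × ℕ × ℕ =>
      RingQuot.mkAlgHom ℂ (rel a) (X 0 ^ e.1 * X 1 ^ e.2.1 * X 2 ^ e.2.2)) = fun e => sgl e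
    from funext fun e => psi_mon a e]
  exact hs

section Span
variable (a : ℂ)

local notation "mk" => RingQuot.mkAlgHom ℂ (rel a)

def y (i : Fin 3) : RingQuot (rel a) := RingQuot.mkAlgHom ℂ (rel a) (X i)

lemma rel_zero {x : F} (hx : x ∈ S a) : mk x = 0 := by
  have : rel a x 0 := ⟨hx, rfl⟩
  simpa using RingQuot.mkAlgHom_rel ℂ this

lemma r1 : y a 1 * y a 0 = y a 0 * y a 1 + (2 : ℂ) • (y a 0 * y a 0) := by
  have h := rel_zero a (show X 1 * X 0 - X 0 * X 1 - (2:ℂ) • (X 0 * X 0) ∈ S a by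
    simp [S])
  simp only [map_sub, map_add, map_mul, map_smul] at h
  rw [sub_sub, sub_eq_zero] at h
  exact h

lemma r2 : y a 2 * y a 0 = y a 0 * y a 2 + (2 : ℂ) • (y a 0 * y a 1) := by
  have h := rel_zero a (show X 2 * X 0 - X 0 * X 2 - (2:ℂ) • (X 0 * X 1) ∈ S a by
    simp [S])
  simp only [map_sub, map_add, map_mul, map_smul] at h
  rw [sub_sub, sub_eq_zero] at h
  exact h

lemma r3 : y a 2 * y a 1 = y a 1 * y a 2 + (2 * a) • (y a 1 * y a 1)
    - (4 * a - 2) • (y a 0 * y a 2) - (8 * a - 4) • (y a 0 * y a 1)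
    + (4 * a * (a + 1)) • (y a 0 * y a 0) := by
  have h := rel_zero a (show X 2 * X 1 - X 1 * X 2 - (2 * a) • (X 1 * X 1)
      + (4 * a - 2) • (X 0 * X 2) + (8 * a - 4) • (X 0 * X 1)
      - (4 * a * (a + 1)) • (X 0 * X 0) ∈ S a by simp [S])
  simp only [map_sub, map_add, map_mul, map_smul] at h
  simp only [y]
  rw [← sub_eq_zero] at h ⊢
  rw [← h]
  module

lemma f1 : ∀ i : ℕ, y a 1 * (y a 0) ^ i
    = (y a 0) ^ i * y a 1 + (2 * (i : ℂ)) • (y a 0) ^ (i + 1) := by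
  intro i
  induction i with
  | zero => simp
  | succ i ih =>
      rw [pow_succ, ← mul_assoc, ih, add_mul, smul_mul_assoc, mul_assoc, r1]
      rw [show (y a 0) ^ (i + 1) * y a 0 = (y a 0) ^ (i + 1 + 1) from (pow_succ _ _).symm]
      push_cast
      simp only [mul_add, pow_succ, mul_assoc, mul_smul_comm, smul_mul_assoc]
      module

lemma f2 : ∀ i : ℕ, y a 2 * (y a 0) ^ i
    = (y a 0) ^ i * y a 2 + (2 * (i : ℂ)) • ((y a 0) ^ i * y a 1)
      + (2 * (i : ℂ) * ((i : ℂ) - 1)) • (y a 0) ^ (i + 1) := by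
  intro i
  induction i with
  | zero => simp
  | succ i ih =>
      rw [pow_succ, ← mul_assoc, ih, add_mul, add_mul, smul_mul_assoc, smul_mul_assoc,
        mul_assoc, r2, mul_assoc, r1]
      push_cast
      simp only [mul_add, pow_succ, mul_assoc, mul_smul_comm, smul_mul_assoc]
      module

def fam : ℕ × ℕ × ℕ → RingQuot (rel a) := fun e =>
  RingQuot.mkAlgHom ℂ (rel a) (X 0 ^ e.1 * X 1 ^ e.2.1 * X 2 ^ e.2.2)

def M : Submodule ℂ (RingQuot (rel a)) := Submodule.span ℂ (Set.range (fam a))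

lemma fam_eq (e : ℕ × ℕ × ℕ) :
    fam a e = (y a 0) ^ e.1 * (y a 1) ^ e.2.1 * (y a 2) ^ e.2.2 := by
  simp [fam, y, map_mul, map_pow]

lemma mon_mem (i j k : ℕ) : (y a 0) ^ i * (y a 1) ^ j * (y a 2) ^ k ∈ M a :=
  Submodule.subset_span ⟨(i, j, k), fam_eq a (i, j, k)⟩

lemma mem_of_eq {x : RingQuot (rel a)} (i j k : ℕ)
    (h : x = (y a 0) ^ i * (y a 1) ^ j * (y a 2) ^ k) : x ∈ M a := by
  rw [h]; exact mon_mem a i j k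

lemma mulLeft_closed {x : RingQuot (rel a)}
    (h : ∀ i j k : ℕ, x * ((y a 0) ^ i * (y a 1) ^ j * (y a 2) ^ k) ∈ M a) :
    ∀ v ∈ M a, x * v ∈ M a := by
  intro v hv
  refine Submodule.span_induction ?_ ?_ ?_ ?_ hv
  · rintro _ ⟨⟨i, j, k⟩, rfl⟩
    rw [fam_eq]
    exact h i j k
  · simp
  · intro u w _ _ hu hw
    rw [mul_add]; exact add_mem hu hw
  · intro c u _ hu
    rw [mul_smul_comm]; exact Submodule.smul_mem _ c hu

lemma L0 : ∀ v ∈ M a, y a 0 * v ∈ M a := by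
  refine mulLeft_closed a fun i j k => ?_
  refine mem_of_eq a (i+1) j k ?_
  rw [pow_succ']; simp only [mul_assoc]

lemma L0pow (n : ℕ) : ∀ v ∈ M a, (y a 0) ^ n * v ∈ M a := by
  induction n with
  | zero => intro v hv; simpa using hv
  | succ n ih =>
      intro v hv
      rw [pow_succ', mul_assoc]
      exact L0 a _ (ih v hv)

lemma L1 : ∀ v ∈ M a, y a 1 * v ∈ M a := by
  refine mulLeft_closed a fun i j k => ?_
  have e : y a 1 * ((y a 0) ^ i * (y a 1) ^ j * (y a 2) ^ k)
      = (y a 1 * (y a 0) ^ i) * (y a 1) ^ j * (y a 2) ^ k := by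
    simp only [mul_assoc]
  rw [e, f1, add_mul, add_mul, smul_mul_assoc, smul_mul_assoc]
  refine add_mem (mem_of_eq a i (j+1) k ?_) (Submodule.smul_mem _ _ (mon_mem a _ _ _))
  rw [pow_succ']; simp only [mul_assoc]

lemma wmem (j k : ℕ) : (y a 1) ^ j * (y a 2) ^ k ∈ M a :=
  mem_of_eq a 0 j k (by simp)

lemma Q : ∀ j k : ℕ, y a 2 * ((y a 1) ^ j * (y a 2) ^ k) ∈ M a := by
  intro j
  induction j with
  | zero =>
      intro k
      refine mem_of_eq a 0 0 (k + 1) ?_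
      simp [pow_succ']
  | succ j ih =>
      intro k
      have e : y a 2 * ((y a 1) ^ (j + 1) * (y a 2) ^ k)
          = (y a 2 * y a 1) * ((y a 1) ^ j * (y a 2) ^ k) := by
        simp only [pow_succ', mul_assoc]
      rw [e, r3]
      simp only [add_mul, sub_mul, smul_mul_assoc, mul_assoc]
      refine add_mem (sub_mem (sub_mem (add_mem ?_ ?_) ?_) ?_) ?_
      · exact L1 a _ (ih k)
      · exact Submodule.smul_mem _ _ (L1 a _ (L1 a _ (wmem a j k)))
      · exact Submodule.smul_mem _ _ (L0 a _ (ih k))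
      · exact Submodule.smul_mem _ _ (L0 a _ (L1 a _ (wmem a j k)))
      · exact Submodule.smul_mem _ _ (L0 a _ (L0 a _ (wmem a j k)))

lemma L2 : ∀ v ∈ M a, y a 2 * v ∈ M a := by
  refine mulLeft_closed a fun i j k => ?_
  have e : y a 2 * ((y a 0) ^ i * (y a 1) ^ j * (y a 2) ^ k)
      = (y a 2 * (y a 0) ^ i) * ((y a 1) ^ j * (y a 2) ^ k) := by
    simp only [mul_assoc]
  rw [e, f2]
  simp only [add_mul, smul_mul_assoc, mul_assoc]
  refine add_mem (add_mem ?_ ?_) ?_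
  · exact L0pow a i _ (Q a j k)
  · exact Submodule.smul_mem _ _ (L0pow a i _ (L1 a _ (wmem a j k)))
  · exact Submodule.smul_mem _ _ (L0pow a (i + 1) _ (wmem a j k))

lemma mk_mul_mem : ∀ x : F, ∀ v ∈ M a, RingQuot.mkAlgHom ℂ (rel a) x * v ∈ M a := by
  intro x
  induction x using FreeAlgebra.induction with
  | grade0 c =>
      intro v hv
      rw [AlgHom.commutes, ← Algebra.smul_def]
      exact Submodule.smul_mem _ _ hv
  | grade1 i =>
      fin_cases i
      · exact L0 a
      · exact L1 a
      · exact L2 a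
  | mul x₁ x₂ h₁ h₂ =>
      intro v hv
      rw [map_mul, mul_assoc]
      exact h₁ _ (h₂ v hv)
  | add x₁ x₂ h₁ h₂ =>
      intro v hv
      rw [map_add, add_mul]
      exact add_mem (h₁ v hv) (h₂ v hv)

lemma span_top : M a = ⊤ := by
  rw [Submodule.eq_top_iff']
  intro q
  obtain ⟨x, rfl⟩ := RingQuot.mkAlgHom_surjective ℂ (rel a) q
  have h1 : (1 : RingQuot (rel a)) ∈ M a := mem_of_eq a 0 0 0 (by simp)
  simpa using mk_mul_mem a x 1 h1

end Span

/-- the images in `F/I` of the monomials `x₁^{a₁} x₂^{a₂} x₃^{a₃}` form a `ℂ`-basis. -/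
theorem basis_R110_t_one (a : ℂ) :
    LinearIndependent ℂ (fun e : ℕ × ℕ × ℕ =>
      RingQuot.mkAlgHom ℂ (rel a) (X 0 ^ e.1 * X 1 ^ e.2.1 * X 2 ^ e.2.2)) ∧
    Submodule.span ℂ (Set.range (fun e : ℕ × ℕ × ℕ =>
      RingQuot.mkAlgHom ℂ (rel a) (X 0 ^ e.1 * X 1 ^ e.2.1 * X 2 ^ e.2.2))) = ⊤ := by
  exact ⟨indep a, span_top a⟩

end
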